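/- Let G=(V,E) be a finite tree with a graph tensor network in Vidal form on it, and let {a,b}∈E. Then, under the natural identification of ⨂_{c∈V}ℂ² with (⨂_{c∈V_{a→b}}ℂ²) ⊗ (⨂_{c∈V_{b→a}}ℂ²), the represented state factorizes across the edge cut as Ψ = Σ_{j=0}^{d_ab−1} λ_ab[j]·u_{a→b}(j) ⊗ u_{b→a}(j). (No orthogonality assumption is needed; this is a structural identity of tree tensor networks.) -/

import Mathlib

open scoped BigOperators

variable {V : Type*} [Fintype V] [DecidableEq V]

/-- A graph tensor network in Vidal form on a finite simple graph `G`: a bond dimension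
`d e ≥ 1` and a nonnegative vector `lam e` (the entries `lam e k` for `k < d e` being the
relevant ones) for each edge `e`, and for each vertex `a` a tensor `Γ a` taking a physical
index in `Fin 2` and a bond index for each edge incident to `a`. -/
structure VidalNet (G : SimpleGraph V) [DecidableRel G.Adj] where
  d : G.edgeSet → ℕ
  d_pos : ∀ e, 0 < d e
  lam : G.edgeSet → ℕ → ℝ
  lam_nonneg : ∀ e k, 0 ≤ lam e k
  Γ : ∀ a : V, Fin 2 → ({e : G.edgeSet // a ∈ (e : Sym2 V)} → ℕ) → ℂ

/-- `branchV G a b` is the vertex set `V_{b→a}` of the connected component of `b` in the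
graph `G` with the edge `{a,b}` removed. -/
def branchV (G : SimpleGraph V) (a b : V) : Set V :=
  {c | (G.deleteEdges {s(a, b)}).Reachable b c}

/-- `branchE G a b` is the edge set `E_{b→a}` of the connected component of `b` in the
graph `G` with the edge `{a,b}` removed. -/
def branchE (G : SimpleGraph V) [DecidableRel G.Adj] (a b : V) : Set G.edgeSet :=
  {e | (e : Sym2 V) ≠ s(a, b) ∧ ∀ x ∈ (e : Sym2 V), x ∈ branchV G a b}

namespace VidalNet

variable {G : SimpleGraph V} [DecidableRel G.Adj]

/-- The state represented by a graph tensor network in Vidal form: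
`Ψ[(i_a)] = Σ_j (Π_{a∈V} Γ_a[i_a,(j_{ab})_{b∈∂a}])·(Π_{e∈E} λ_e[j_e])`. -/
noncomputable def psi (net : VidalNet G) (i : V → Fin 2) : ℂ :=
  ∑ j ∈ Fintype.piFinset (fun e : G.edgeSet => Finset.range (net.d e)),
    (∏ a : V, net.Γ a (i a) (fun e => j e.1)) * ∏ e : G.edgeSet, (net.lam e (j e) : ℂ)

open scoped Classical in
/-- The Schmidt vector `u_{a→b}(j)` of the subtree `V_{a→b}` of `a` (the connected component
of `a` in the graph with the edge `{a,b}` removed). -/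
noncomputable def schmidt (net : VidalNet G) (a b : V) (j : ℕ) :
    ({c : V // c ∈ branchV G b a} → Fin 2) → ℂ := fun i =>
  ∑ k ∈ Fintype.piFinset (fun e : {e : G.edgeSet // e ∈ branchE G b a} =>
      Finset.range (net.d e.1)),
    (∏ c : {c : V // c ∈ branchV G b a},
        net.Γ c.1 (i c)
          (fun e => if (e.1 : Sym2 V) = s(a, b) then j
            else if h : e.1 ∈ branchE G b a then k ⟨e.1, h⟩ else 0)) *
      ∏ e : {e : G.edgeSet // e ∈ branchE G b a}, (net.lam e.1 (k e) : ℂ)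

open scoped Classical in
/-- The Gram matrix `G_{a→b}[j,j'] = ⟨u_{a→b}(j'), u_{a→b}(j)⟩` of the Schmidt vectors,
conjugate-linear in the first argument. -/
noncomputable def gram (net : VidalNet G) (a b : V) (j j' : ℕ) : ℂ :=
  ∑ i : ({c : V // c ∈ branchV G b a} → Fin 2),
    (starRingEnd ℂ) (net.schmidt a b j' i) * net.schmidt a b j i

/-- The local orthogonality condition at the directed edge `a → b`. -/
def LocalOrtho (net : VidalNet G) {a b : V} (hab : G.Adj a b) : Prop :=
  ∀ j j' : ℕ, j < net.d ⟨s(a, b), (SimpleGraph.mem_edgeSet G).mpr hab⟩ →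
    j' < net.d ⟨s(a, b), (SimpleGraph.mem_edgeSet G).mpr hab⟩ →
    (if j = j' then (1 : ℂ) else 0) =
      ∑ ia : Fin 2,
        ∑ g ∈ Fintype.piFinset
            (fun e : {e : {e : G.edgeSet // a ∈ (e : Sym2 V)} // (e.1 : Sym2 V) ≠ s(a, b)} =>
              Finset.range (net.d e.1.1)),
          net.Γ a ia (fun e => if h : (e.1 : Sym2 V) = s(a, b) then j else g ⟨e, h⟩) *
            (starRingEnd ℂ)
              (net.Γ a ia (fun e => if h : (e.1 : Sym2 V) = s(a, b) then j' else g ⟨e, h⟩)) *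
            ∏ e : {e : {e : G.edgeSet // a ∈ (e : Sym2 V)} // (e.1 : Sym2 V) ≠ s(a, b)},
              ((net.lam e.1.1 (g e) : ℂ)) ^ 2

end VidalNet


section TreeAux

variable {V : Type*} [Fintype V] [DecidableEq V] {G : SimpleGraph V}
set_option linter.unusedSectionVars false

private lemma aux_step (a b : V) : ∀ {x y : V}, G.Walk x y →
    ((G.deleteEdges {s(a,b)}).Reachable a y ∨ (G.deleteEdges {s(a,b)}).Reachable b y) →
    ((G.deleteEdges {s(a,b)}).Reachable a x ∨ (G.deleteEdges {s(a,b)}).Reachable b x) := by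
  intro x y p
  induction p with
  | nil => exact id
  | @cons x z y h q ih =>
    intro hy
    have hz := ih hy
    by_cases he : s(x, z) = s(a, b)
    · rw [Sym2.eq_iff] at he
      rcases he with ⟨rfl, rfl⟩ | ⟨rfl, rfl⟩
      · exact Or.inl (SimpleGraph.Reachable.refl _)
      · exact Or.inr (SimpleGraph.Reachable.refl _)
    · have hcd : (G.deleteEdges {s(a,b)}).Adj x z := by
        simp only [SimpleGraph.deleteEdges_adj, Set.mem_singleton_iff]
        exact ⟨h, he⟩
      rcases hz with h1 | h1
      · exact Or.inl (h1.trans hcd.symm.reachable)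
      · exact Or.inr (h1.trans hcd.symm.reachable)

private lemma aux_cover (hc : G.Connected) (a b c : V) :
    (G.deleteEdges {s(a,b)}).Reachable a c ∨ (G.deleteEdges {s(a,b)}).Reachable b c := by
  obtain ⟨p⟩ := hc c a
  exact aux_step a b p (Or.inl (SimpleGraph.Reachable.refl _))

private lemma aux_bridge (hG : G.IsTree) {a b : V} (hab : G.Adj a b) :
    ¬ (G.deleteEdges {s(a,b)}).Reachable a b := by
  have h := hG.2
  rw [SimpleGraph.isAcyclic_iff_forall_adj_isBridge] at h
  exact (SimpleGraph.isBridge_iff).mp (h hab)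

private lemma mem_branchV_ba {a b c : V} :
    c ∈ branchV G b a ↔ (G.deleteEdges {s(a,b)}).Reachable a c := by
  have h : s(b,a) = s(a,b) := Sym2.eq_swap
  simp only [branchV, Set.mem_setOf_eq, h]

private lemma mem_branchV_ab {a b c : V} :
    c ∈ branchV G a b ↔ (G.deleteEdges {s(a,b)}).Reachable b c := Iff.rfl

private lemma vdisj (hG : G.IsTree) {a b : V} (hab : G.Adj a b) (c : V) :
    c ∈ branchV G b a → c ∈ branchV G a b → False := fun h1 h2 =>
  aux_bridge hG hab ((mem_branchV_ba.mp h1).trans (mem_branchV_ab.mp h2).symm)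

private lemma vcover (hG : G.IsTree) (a b c : V) :
    c ∈ branchV G b a ∨ c ∈ branchV G a b := by
  rcases aux_cover hG.1 a b c with h | h
  · exact Or.inl (mem_branchV_ba.mpr h)
  · exact Or.inr h

variable [DecidableRel G.Adj]

private lemma edge_cases (hG : G.IsTree) {a b : V} (hab : G.Adj a b) (e : G.edgeSet) :
    (e : Sym2 V) = s(a, b) ∨ e ∈ branchE G b a ∨ e ∈ branchE G a b := by
  by_cases he : (e : Sym2 V) = s(a, b)
  · exact Or.inl he
  refine Or.inr ?_
  obtain ⟨e, hm⟩ := e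
  induction e using Sym2.ind with
  | _ x y =>
    have hadj : G.Adj x y := (G.mem_edgeSet).mp hm
    have hadj' : (G.deleteEdges {s(a,b)}).Adj x y := by
      simp only [SimpleGraph.deleteEdges_adj, Set.mem_singleton_iff]
      exact ⟨hadj, he⟩
    rcases vcover hG a b x with hx | hx
    · left
      refine ⟨fun hc => he (hc.trans Sym2.eq_swap), fun z hz => ?_⟩
      rcases Sym2.mem_iff.mp hz with rfl | rfl
      · exact hx
      · exact mem_branchV_ba.mpr ((mem_branchV_ba.mp hx).trans hadj'.reachable)
    · right
      refine ⟨he, fun z hz => ?_⟩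
      rcases Sym2.mem_iff.mp hz with rfl | rfl
      · exact hx
      · exact mem_branchV_ab.mpr ((mem_branchV_ab.mp hx).trans hadj'.reachable)

private lemma edisjAB (hG : G.IsTree) {a b : V} (hab : G.Adj a b) (e : G.edgeSet) :
    e ∈ branchE G b a → e ∈ branchE G a b → False := by
  intro h1 h2
  obtain ⟨e, hm⟩ := e
  induction e using Sym2.ind with
  | _ x y =>
    exact vdisj hG hab x (h1.2 x (Sym2.mem_mk_left x y)) (h2.2 x (Sym2.mem_mk_left x y))

private lemma incidentA (hG : G.IsTree) {a b : V} (hab : G.Adj a b) {c : V} {e : G.edgeSet}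
    (hc : c ∈ branchV G b a) (hce : c ∈ (e : Sym2 V)) (hne : (e : Sym2 V) ≠ s(a, b)) :
    e ∈ branchE G b a := by
  rcases edge_cases hG hab e with h | h | h
  · exact absurd h hne
  · exact h
  · exact absurd (h.2 c hce) (fun hc2 => vdisj hG hab c hc hc2)

private lemma incidentB (hG : G.IsTree) {a b : V} (hab : G.Adj a b) {c : V} {e : G.edgeSet}
    (hc : c ∈ branchV G a b) (hce : c ∈ (e : Sym2 V)) (hne : (e : Sym2 V) ≠ s(a, b)) :
    e ∈ branchE G a b := by
  rcases edge_cases hG hab e with h | h | h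
  · exact absurd h hne
  · exact absurd (h.2 c hce) (fun hc2 => vdisj hG hab c hc2 hc)
  · exact h

end TreeAux

/-- For a graph tensor network in Vidal form on a finite tree and any edge
`{a,b}`, the represented state factorizes across the edge cut as
`Ψ = Σ_{j<d_ab} λ_ab[j]·u_{a→b}(j) ⊗ u_{b→a}(j)` (under the natural identification of
`⨂_{c∈V}ℂ²` with the tensor product of the two sides of the cut); no orthogonality
assumption is needed. -/
theorem tree_state_factorizes_across_edge
    {V : Type*} [Fintype V] [DecidableEq V] {G : SimpleGraph V} [DecidableRel G.Adj]
    (hG : G.IsTree) (net : VidalNet G) (a b : V) (hab : G.Adj a b) (i : V → Fin 2) :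
    net.psi i =
      ∑ jj ∈ Finset.range (net.d ⟨s(a, b), (SimpleGraph.mem_edgeSet G).mpr hab⟩),
        (net.lam ⟨s(a, b), (SimpleGraph.mem_edgeSet G).mpr hab⟩ jj : ℂ) *
          net.schmidt a b jj (fun c => i c.1) * net.schmidt b a jj (fun c => i c.1) := by
  classical
  have he0m : s(a, b) ∈ G.edgeSet := (SimpleGraph.mem_edgeSet G).mpr hab
  set e0 : G.edgeSet := ⟨s(a, b), he0m⟩ with he0def
  have hA0 : e0 ∉ branchE G b a := fun hc => hc.1 Sym2.eq_swap
  have hB0 : e0 ∉ branchE G a b := fun hc => hc.1 rfl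
  have hnotV : ∀ c, ¬ c ∈ branchV G b a ↔ c ∈ branchV G a b :=
    fun c => ⟨fun h => (vcover hG a b c).resolve_left h, fun h h' => vdisj hG hab c h' h⟩
  rw [VidalNet.psi]
  have main : ∑ j ∈ Fintype.piFinset (fun e : G.edgeSet => Finset.range (net.d e)),
      (∏ a' : V, net.Γ a' (i a') (fun e => j e.1)) * ∏ e : G.edgeSet, (net.lam e (j e) : ℂ)
    = ∑ p ∈ (Finset.range (net.d e0)) ×ˢ
        ((Fintype.piFinset fun e : {e : G.edgeSet // e ∈ branchE G b a} =>
            Finset.range (net.d e.1)) ×ˢ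
         (Fintype.piFinset fun e : {e : G.edgeSet // e ∈ branchE G a b} =>
            Finset.range (net.d e.1))),
        (net.lam e0 p.1 : ℂ) *
        (((∏ c : {c : V // c ∈ branchV G b a},
            net.Γ c.1 (i c.1) (fun e => if (e.1 : Sym2 V) = s(a, b) then p.1
              else if h : e.1 ∈ branchE G b a then p.2.1 ⟨e.1, h⟩ else 0)) *
          ∏ e : {e : G.edgeSet // e ∈ branchE G b a}, (net.lam e.1 (p.2.1 e) : ℂ)) *
        ((∏ c : {c : V // c ∈ branchV G a b},
            net.Γ c.1 (i c.1) (fun e => if (e.1 : Sym2 V) = s(b, a) then p.1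
              else if h : e.1 ∈ branchE G a b then p.2.2 ⟨e.1, h⟩ else 0)) *
          ∏ e : {e : G.edgeSet // e ∈ branchE G a b}, (net.lam e.1 (p.2.2 e) : ℂ))) := by
    refine Finset.sum_nbij' (fun j => (j e0, fun e => j e.1, fun e => j e.1))
      (fun p e => if h : e ∈ branchE G b a then p.2.1 ⟨e, h⟩
        else if h' : e ∈ branchE G a b then p.2.2 ⟨e, h'⟩ else p.1) ?_ ?_ ?_ ?_ ?_
    · intro j hj
      simp only [Finset.mem_product, Fintype.mem_piFinset] at hj ⊢
      exact ⟨hj e0, fun e => hj e.1, fun e => hj e.1⟩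
    · intro p hp
      simp only [Finset.mem_product, Fintype.mem_piFinset] at hp ⊢
      intro e
      by_cases h : e ∈ branchE G b a
      · rw [dif_pos h]; exact hp.2.1 ⟨e, h⟩
      · rw [dif_neg h]
        by_cases h' : e ∈ branchE G a b
        · rw [dif_pos h']; exact hp.2.2 ⟨e, h'⟩
        · rw [dif_neg h']
          rcases edge_cases hG hab e with hc | hc | hc
          · have he : e = e0 := Subtype.ext hc
            rw [he]; exact hp.1
          · exact absurd hc h
          · exact absurd hc h'
    · intro j hj
      funext e
      show (if _h : e ∈ branchE G b a then j e
        else if _h' : e ∈ branchE G a b then j e else j e0) = j e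
      by_cases h : e ∈ branchE G b a
      · rw [dif_pos h]
      · rw [dif_neg h]
        by_cases h' : e ∈ branchE G a b
        · rw [dif_pos h']
        · rw [dif_neg h']
          rcases edge_cases hG hab e with hc | hc | hc
          · have he : e = e0 := Subtype.ext hc
            rw [he]
          · exact absurd hc h
          · exact absurd hc h'
    · intro p hp
      refine Prod.ext ?_ (Prod.ext ?_ ?_)
      · show (if h : e0 ∈ branchE G b a then p.2.1 ⟨e0, h⟩
          else if h' : e0 ∈ branchE G a b then p.2.2 ⟨e0, h'⟩ else p.1) = p.1
        rw [dif_neg hA0, dif_neg hB0]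
      · funext e
        show (if h : e.1 ∈ branchE G b a then p.2.1 ⟨e.1, h⟩
          else if h' : e.1 ∈ branchE G a b then p.2.2 ⟨e.1, h'⟩ else p.1) = p.2.1 e
        rw [dif_pos e.2]
      · funext e
        show (if h : e.1 ∈ branchE G b a then p.2.1 ⟨e.1, h⟩
          else if h' : e.1 ∈ branchE G a b then p.2.2 ⟨e.1, h'⟩ else p.1) = p.2.2 e
        rw [dif_neg (fun h => edisjAB hG hab e.1 h e.2), dif_pos e.2]
    · intro j hj
      show (∏ a' : V, net.Γ a' (i a') (fun e => j e.1)) *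
          (∏ e : G.edgeSet, (net.lam e (j e) : ℂ))
        = (net.lam e0 (j e0) : ℂ) *
          (((∏ c : {c : V // c ∈ branchV G b a},
              net.Γ c.1 (i c.1) (fun e => if (e.1 : Sym2 V) = s(a, b) then j e0
                else if h : e.1 ∈ branchE G b a then j e.1 else 0)) *
            ∏ e : {e : G.edgeSet // e ∈ branchE G b a}, (net.lam e.1 (j e.1) : ℂ)) *
          ((∏ c : {c : V // c ∈ branchV G a b},
              net.Γ c.1 (i c.1) (fun e => if (e.1 : Sym2 V) = s(b, a) then j e0
                else if h : e.1 ∈ branchE G a b then j e.1 else 0)) *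
            ∏ e : {e : G.edgeSet // e ∈ branchE G a b}, (net.lam e.1 (j e.1) : ℂ)))
      have h1 : (∏ a' : V, net.Γ a' (i a') (fun e => j e.1))
          = (∏ c : {c : V // c ∈ branchV G b a},
              net.Γ c.1 (i c.1) (fun e => if (e.1 : Sym2 V) = s(a, b) then j e0
                else if h : e.1 ∈ branchE G b a then j e.1 else 0)) *
            (∏ c : {c : V // c ∈ branchV G a b},
              net.Γ c.1 (i c.1) (fun e => if (e.1 : Sym2 V) = s(b, a) then j e0
                else if h : e.1 ∈ branchE G a b then j e.1 else 0)) := by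
        rw [← Fintype.prod_subtype_mul_prod_subtype (fun c => c ∈ branchV G b a)
          (fun a' => net.Γ a' (i a') (fun e => j e.1))]
        congr 1
        · refine Finset.prod_congr rfl fun c _ => ?_
          congr 1
          funext e
          by_cases hc : (e.1 : Sym2 V) = s(a, b)
          · rw [if_pos hc]
            have he : e.1 = e0 := Subtype.ext hc
            rw [he]
          · rw [if_neg hc, dif_pos (incidentA hG hab c.2 e.2 hc)]
        · refine Fintype.prod_equiv (Equiv.subtypeEquivRight hnotV) _ _ fun c => ?_
          congr 1
          funext e
          by_cases hc : (e.1 : Sym2 V) = s(b, a)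
          · rw [if_pos hc]
            have he : e.1 = e0 := Subtype.ext (hc.trans Sym2.eq_swap)
            rw [he]
          · rw [if_neg hc,
              dif_pos (incidentB hG hab ((hnotV c.1).mp c.2) e.2
                (fun hh => hc (hh.trans Sym2.eq_swap)))]
      have h2 : (∏ e : G.edgeSet, (net.lam e (j e) : ℂ))
          = (net.lam e0 (j e0) : ℂ) *
            ((∏ e : {e : G.edgeSet // e ∈ branchE G b a}, (net.lam e.1 (j e.1) : ℂ)) *
             ∏ e : {e : G.edgeSet // e ∈ branchE G a b}, (net.lam e.1 (j e.1) : ℂ)) := by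
        rw [← Finset.mul_prod_erase Finset.univ _ (Finset.mem_univ e0)]
        congr 1
        rw [← Finset.prod_filter_mul_prod_filter_not (Finset.univ.erase e0)
          (fun e => e ∈ branchE G b a)]
        congr 1
        · exact Finset.prod_subtype _ (fun x => by
            simp only [Finset.mem_filter, Finset.mem_erase, Finset.mem_univ, and_true,
              true_and]
            exact ⟨fun h => h.2, fun h => ⟨fun hx => hA0 (hx ▸ h), h⟩⟩) _
        · exact Finset.prod_subtype _ (fun x => by
            simp only [Finset.mem_filter, Finset.mem_erase, Finset.mem_univ, and_true,
              true_and]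
            constructor
            · rintro ⟨hx, hnA⟩
              rcases edge_cases hG hab x with hc | hc | hc
              · exact absurd (Subtype.ext hc) hx
              · exact absurd hc hnA
              · exact hc
            · intro h
              exact ⟨fun hx => hB0 (hx ▸ h), fun hA => edisjAB hG hab x hA h⟩) _
      rw [h1, h2]
      ring
  rw [main, Finset.sum_product]
  refine Finset.sum_congr rfl fun jj hjj => ?_
  rw [Finset.sum_product]
  simp only [VidalNet.schmidt]
  rw [mul_assoc, Finset.sum_mul_sum]
  simp only [Finset.mul_sum]
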